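/- Let S₁ and S₂ be idempotent commutative semirings (i.e., x·x = x for all x). Then every ideal of S₁ × S₂ is directly decomposable. -/
import Mathlib


/-- An ideal of a (possibly non-unital) commutative semiring. -/
def IsSemiringIdeal {S : Type*} [NonUnitalCommSemiring S] (I : Set S) : Prop :=
  (0 : S) ∈ I ∧ (∀ a b : S, a ∈ I → b ∈ I → a + b ∈ I) ∧ (∀ a s : S, a ∈ I → a * s ∈ I)

theorem stmt_6 {S₁ S₂ : Type*} [NonUnitalCommSemiring S₁] [NonUnitalCommSemiring S₂]
    (hidem₁ : ∀ x : S₁, x * x = x) (hidem₂ : ∀ x : S₂, x * x = x)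
    (I : Set (S₁ × S₂)) (hI : IsSemiringIdeal I) :
    ∃ I₁ : Set S₁, ∃ I₂ : Set S₂,
      IsSemiringIdeal I₁ ∧ IsSemiringIdeal I₂ ∧ I = I₁ ×ˢ I₂ := by
  obtain ⟨h0, hadd, hmul⟩ := hI
  refine ⟨{a | ((a, 0) : S₁ × S₂) ∈ I}, {b | ((0, b) : S₁ × S₂) ∈ I}, ?_, ?_, ?_⟩
  · refine ⟨h0, fun a b ha hb => ?_, fun a s ha => ?_⟩
    · have := hadd _ _ ha hb
      simpa using this
    · have := hmul _ (s, 0) ha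
      simpa using this
  · refine ⟨h0, fun a b ha hb => ?_, fun a s ha => ?_⟩
    · have := hadd _ _ ha hb
      simpa using this
    · have := hmul _ (0, s) ha
      simpa using this
  · ext ⟨a, b⟩
    simp only [Set.mem_prod, Set.mem_setOf_eq]
    constructor
    · intro hab
      constructor
      · have := hmul _ (a, 0) hab
        simpa [hidem₁ a] using this
      · have := hmul _ (0, b) hab
        simpa [hidem₂ b] using this
    · rintro ⟨h1, h2⟩
      have := hadd _ _ h1 h2
      simpa using this
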